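/- If a hierarchical abstract normative system H is totally ordered, then the defeat relation of the argumentation framework (Arg(H), Def(H, ⪰_w)) obtained via weakest link contains no cycle among ordinary arguments; in particular the strict preference ≻_w is a strict partial order (irreflexive and transitive) on arguments. -/

import Mathlib

namespace HANSF

/-- Literals: ⊤, positive atoms and negated atoms. -/
inductive Lit (E : Type) where
  | top : Lit E
  | pos : E → Lit E
  | neg : E → Lit E
deriving DecidableEq

variable {E : Type}

/-- Complement (negation) of a literal; `⊤` is mapped to itself (junk value). -/
def Lit.compl : Lit E → Lit E
  | .top => .top
  | .pos e => .neg e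
  | .neg e => .pos e

/-- `y` is the complement of the (non-`⊤`) literal `x`. -/
def Lit.isCompl (x y : Lit E) : Prop := x ≠ .top ∧ y = x.compl

/-- A set of literals is consistent iff it contains no literal together with its negation. -/
def LitConsistent (S : Set (Lit E)) : Prop := ∀ x ∈ S, ∀ y ∈ S, ¬ x.isCompl y

/-- A norm is a pair (body, head) of literals. -/
abbrev Norm (E : Type) := Lit E × Lit E

/-- Hierarchical abstract normative system. -/
structure HANS (E : Type) [DecidableEq E] where
  N : Finset (Norm E)
  C : Finset (Lit E)
  r : Norm E → ℕ
  top_mem : Lit.top ∈ C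
  C_cons : LitConsistent (C : Set (Lit E))

variable [DecidableEq E]

/-- The HANS is totally ordered: distinct norms have distinct ranks. -/
def TotallyOrdered (H : HANS E) : Prop :=
  ∀ u ∈ H.N, ∀ v ∈ H.N, H.r u = H.r v → u = v

/-- Consecutive norms are chained: the head of each norm is the body of the next. -/
def chain : List (Norm E) → Prop
  | a :: b :: t => a.2 = b.1 ∧ chain (b :: t)
  | _ => True

/-- All literals traversed by a list of norms. -/
def litsOf : List (Norm E) → List (Lit E)
  | [] => []
  | a :: t => a.1 :: a.2 :: litsOf t

/-- A path from the context `C` with respect to the set of norms `R`: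
a nonempty chained sequence of distinct norms from `R` whose first body lies in `C`. -/
def IsPathFrom (C : Finset (Lit E)) (R : Set (Norm E)) : List (Norm E) → Prop
  | [] => False
  | u :: t => u.1 ∈ C ∧ chain (u :: t) ∧ (∀ v ∈ u :: t, v ∈ R) ∧ (u :: t).Nodup

/-- An ordinary argument: a consistent path from the context w.r.t. `N`. -/
def IsOrdArg (H : HANS E) (l : List (Norm E)) : Prop :=
  IsPathFrom H.C (↑H.N) l ∧ LitConsistent {x | x ∈ litsOf l}

/-- `x` is reachable from `C` via a path w.r.t. `R`. -/
def reach (C : Finset (Lit E)) (R : Set (Norm E)) (x : Lit E) : Prop :=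
  ∃ l u, IsPathFrom C R l ∧ l.getLast? = some u ∧ u.2 = x

/-- Arguments: context arguments and ordinary arguments. -/
inductive Arg (E : Type) where
  | ctx : Lit E → Arg E
  | ord : List (Norm E) → Arg E
deriving DecidableEq

/-- Membership in `Arg(H)`. -/
def Arg.IsArg (H : HANS E) : Arg E → Prop
  | .ctx a => a ∈ H.C
  | .ord l => IsOrdArg H l

/-- Conclusion of an argument. -/
def Arg.concl : Arg E → Lit E
  | .ctx a => a
  | .ord l => (l.getLastD (Lit.top, Lit.top)).2

def Arg.isCtx : Arg E → Prop
  | .ctx _ => True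
  | .ord _ => False

def Arg.isOrd : Arg E → Prop
  | .ctx _ => False
  | .ord _ => True

/-- `a` is a sub-argument of `b` (prefix of ordinary arguments; includes `b` itself). -/
def Arg.Sub : Arg E → Arg E → Prop
  | .ord l', .ord l => l' ≠ [] ∧ l' <+: l
  | _, _ => False

/-- Proper sub-argument. -/
def Arg.PSub (a b : Arg E) : Prop := a.Sub b ∧ a ≠ b

def ArgSet (H : HANS E) : Set (Arg E) := {a | a.IsArg H}

/-- `a` attacks `b`: some sub-argument of `b` has conclusion complementary to `concl a`. -/
def Attacks (a b : Arg E) : Prop :=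
  ∃ b', b'.Sub b ∧ Lit.isCompl (Arg.concl b') (Arg.concl a)

/-- `a` defeats `b` relative to a preference relation `pr` on arguments. -/
def Defeats (pr : Arg E → Arg E → Prop) (a b : Arg E) : Prop :=
  ∃ b', b'.Sub b ∧ Lit.isCompl (Arg.concl b') (Arg.concl a) ∧
    (a.isCtx ∨ (a.isOrd ∧ pr a b'))

/-- Weakest link (disjoint elitist) preference. -/
def wlPref (r : Norm E → ℕ) : Arg E → Arg E → Prop
  | .ord l1, .ord l2 => ∃ v ∈ l2, v ∉ l1 ∧ ∀ u ∈ l1, u ∉ l2 → r v ≤ r u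
  | _, _ => False

/-- Last link preference: compare the ranks of the top (last) norms. -/
def llPref (r : Norm E → ℕ) : Arg E → Arg E → Prop
  | .ord l1, .ord l2 => ∃ u v, l1.getLast? = some u ∧ l2.getLast? = some v ∧ r v ≤ r u
  | _, _ => False

/-- Strict preference. -/
def sPref {α : Type} (pr : α → α → Prop) (a b : α) : Prop := pr a b ∧ ¬ pr b a

section Semantics

variable {α : Type}

def ConflictFree (A : Set α) (D : α → α → Prop) (B : Set α) : Prop :=
  B ⊆ A ∧ ∀ a ∈ B, ∀ b ∈ B, ¬ D a b

def Defends (A : Set α) (D : α → α → Prop) (B : Set α) (x : α) : Prop :=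
  ∀ b ∈ A, D b x → ∃ c ∈ B, D c b

def Admissible (A : Set α) (D : α → α → Prop) (B : Set α) : Prop :=
  ConflictFree A D B ∧ ∀ a ∈ B, Defends A D B a

def Complete (A : Set α) (D : α → α → Prop) (B : Set α) : Prop :=
  Admissible A D B ∧ ∀ a ∈ A, Defends A D B a → a ∈ B

def Grounded (A : Set α) (D : α → α → Prop) (B : Set α) : Prop :=
  Complete A D B ∧ ∀ B', Complete A D B' → B ⊆ B'

def Preferred (A : Set α) (D : α → α → Prop) (B : Set α) : Prop :=
  Admissible A D B ∧ ∀ B', Admissible A D B' → B ⊆ B' → B' = B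

def Stable (A : Set α) (D : α → α → Prop) (B : Set α) : Prop :=
  ConflictFree A D B ∧ ∀ a ∈ A, a ∉ B → ∃ b ∈ B, D b a

/-- The relation `D` has a cycle inside `A`. -/
def HasCycle (A : Set α) (D : α → α → Prop) : Prop :=
  ∃ a l, (∀ x ∈ a :: l, x ∈ A) ∧ List.Chain D a l ∧
    D ((a :: l).getLast (by simp)) a

end Semantics

/-- Conclusions of the ordinary arguments in a set of arguments. -/
def ordConcls (Ex : Set (Arg E)) : Set (Lit E) :=
  {x | ∃ l, Arg.ord l ∈ Ex ∧ Arg.concl (Arg.ord l) = x}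

def Outfamily (H : HANS E) (pr : Arg E → Arg E → Prop) : Set (Set (Lit E)) :=
  {S | ∃ Ex, Stable (ArgSet H) (Defeats pr) Ex ∧ S = ordConcls Ex}

/-- Heads of a set of norms. -/
def consSet (R : Finset (Norm E)) : Finset (Lit E) := R.image Prod.snd

/-- Applicable norms: `Appl(N, C, R)`. -/
def Appl (H : HANS E) (R : Finset (Norm E)) : Finset (Norm E) :=
  (H.N \ R).filter (fun u => u.1 ∈ H.C ∪ consSet R ∧
    ¬ (u.2 ∈ H.C ∪ consSet R ∧ u.2.compl ∈ H.C ∪ consSet R))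

open scoped Classical in
/-- The applicable norms of maximal rank. -/
noncomputable def maxSel (H : HANS E) (R : Finset (Norm E)) : Finset (Norm E) :=
  (Appl H R).filter (fun u => ∀ v ∈ Appl H R, H.r v ≤ H.r u)

/-- The Greedy sequence `R_i`. -/
noncomputable def greedyR (H : HANS E) : ℕ → Finset (Norm E)
  | 0 => ∅
  | i + 1 => greedyR H i ∪ maxSel H (greedyR H i)

/-- The limit `R = ⋃ R_i` of the Greedy construction. -/
noncomputable def greedyLimit (H : HANS E) : Set (Norm E) := ⋃ i, ↑(greedyR H i)

/-- The Greedy extension `R(C)`. -/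
noncomputable def GreedySet (H : HANS E) : Set (Lit E) :=
  {x | reach H.C (greedyLimit H) x}

/-- The reduct `H^X`. -/
def reduct (H : HANS E) (X : Finset (Lit E)) : HANS E where
  N := (H.N.filter (fun u => u.1 ∈ H.C ∪ X)).image (fun u => (Lit.top, u.2))
  C := H.C
  r := fun u => (H.N.filter (fun v => v.1 ∈ H.C ∪ X ∧ v.2 = u.2)).sup H.r
  top_mem := H.top_mem
  C_cons := H.C_cons

/-- `u` is a weakest norm (of minimal rank) of the list `l`. -/
def WeakestNorm (r : Norm E → ℕ) (u : Norm E) (l : List (Norm E)) : Prop :=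
  u ∈ l ∧ ∀ v ∈ l, r u ≤ r v

/-- `l'` is the weakest sub-argument of the ordinary argument `l`. -/
def IsWeakestSub (H : HANS E) (l l' : List (Norm E)) : Prop :=
  l' ≠ [] ∧ l' <+: l ∧ ∃ u, l'.getLast? = some u ∧ WeakestNorm H.r u l

/-- `g ∈ warg(b)`: `g` is a super-argument of the weakest sub-argument of `b`. -/
def Warg (H : HANS E) (b g : Arg E) : Prop :=
  ∃ lb l', b = .ord lb ∧ IsWeakestSub H lb l' ∧ (Arg.ord l').Sub g

/-- Arguments of the expanded framework: the original arguments plus `aux`. -/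
inductive XArg (E : Type) where
  | base : Arg E → XArg E
  | aux : XArg E

/-- Defeat in the expanded framework: the original weakest-link defeats
plus the auxiliary defeats `Φ₁` and `Φ₂`. -/
def XDef (H : HANS E) : XArg E → XArg E → Prop
  | .base a, .base g =>
      Defeats (wlPref H.r) a g ∨
      (∃ b, Arg.IsArg H b ∧ Defeats (wlPref H.r) a b ∧ ¬ Warg H b a ∧
        Warg H b g ∧ g.PSub b)
  | .aux, .base g =>
      ∃ a b, Arg.IsArg H a ∧ Arg.IsArg H b ∧ Defeats (wlPref H.r) a b ∧
        Warg H b a ∧ Warg H b g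
  | _, .aux => False

def XArgSet (H : HANS E) : Set (XArg E) :=
  {x | x = .aux ∨ ∃ a, x = .base a ∧ a.IsArg H}

open scoped Classical in
/-- The Optimization construction along the priority-ordered list `T` of norms. -/
noncomputable def optFold (H : HANS E) (T : List (Norm E)) : Finset (Norm E) :=
  T.foldl (fun R u =>
    if LitConsistent ((↑H.C : Set (Lit E)) ∪ {x | reach H.C (↑(insert u R)) x})
    then insert u R else R) ∅

/-- The Optimization extension `R_n(C)`. -/
noncomputable def OptSet (H : HANS E) (T : List (Norm E)) : Set (Lit E) :=
  {x | reach H.C (↑(optFold H T)) x}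

/-! ### Auxiliary lemmas for Statement 6 -/

section WLProof

lemma sum_range_two_pow_aux (e : ℕ) : ∑ i ∈ Finset.range e, 2 ^ i < 2 ^ e := by
  induction e with
  | zero => simp
  | succ n ih => rw [Finset.sum_range_succ, pow_succ]; omega

lemma sum_two_pow_lt_aux (s : Finset ℕ) (e : ℕ) (h : ∀ i ∈ s, i < e) :
    ∑ i ∈ s, 2 ^ i < 2 ^ e :=
  lt_of_le_of_lt
    (Finset.sum_le_sum_of_subset fun i hi => Finset.mem_range.2 (h i hi))
    (sum_range_two_pow_aux e)

variable {E : Type} [DecidableEq E]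

/-- Binary weight of a finite set of norms. -/
noncomputable def wlWt (H : HANS E) (S : Finset (Norm E)) : ℕ :=
  ∑ u ∈ S, 2 ^ (H.N.sup H.r - H.r u)

lemma wlWt_lt (H : HANS E) (hto : TotallyOrdered H) {S T : Finset (Norm E)}
    (hS : S ⊆ H.N) (hT : T ⊆ H.N) {v : Norm E} (hvT : v ∈ T) (hvS : v ∉ S)
    (hmin : ∀ u ∈ S, u ∉ T → H.r v ≤ H.r u) :
    wlWt H S < wlWt H T := by
  set M := H.N.sup H.r with hM
  have hrle : ∀ u ∈ H.N, H.r u ≤ M := fun u hu => Finset.le_sup hu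
  have hsplitS : wlWt H S
      = (∑ u ∈ S ∩ T, 2 ^ (M - H.r u)) + ∑ u ∈ S \ T, 2 ^ (M - H.r u) :=
    (Finset.sum_inter_add_sum_sdiff S T _).symm
  have hsplitT : wlWt H T
      = (∑ u ∈ T ∩ S, 2 ^ (M - H.r u)) + ∑ u ∈ T \ S, 2 ^ (M - H.r u) :=
    (Finset.sum_inter_add_sum_sdiff T S _).symm
  rw [hsplitS, hsplitT, Finset.inter_comm S T]
  refine Nat.add_lt_add_left ?_ _
  have hv2 : (2:ℕ) ^ (M - H.r v) ≤ ∑ u ∈ T \ S, 2 ^ (M - H.r u) :=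
    Finset.single_le_sum (f := fun u => (2:ℕ) ^ (M - H.r u))
      (fun u _ => Nat.zero_le _) (Finset.mem_sdiff.2 ⟨hvT, hvS⟩)
  refine lt_of_lt_of_le ?_ hv2
  have hstrict : ∀ u ∈ S \ T, H.r v < H.r u := by
    intro u hu
    rcases Finset.mem_sdiff.1 hu with ⟨huS, huT⟩
    rcases lt_or_eq_of_le (hmin u huS huT) with h | h
    · exact h
    · exact absurd (hto v (hT hvT) u (hS huS) h)
        (by rintro rfl; exact huT hvT)
  have hinj : ∀ u1 ∈ S \ T, ∀ u2 ∈ S \ T,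
      M - H.r u1 = M - H.r u2 → u1 = u2 := by
    intro u1 h1 u2 h2 e
    have r1 : H.r u1 ≤ M := hrle _ (hS (Finset.mem_sdiff.1 h1).1)
    have r2 : H.r u2 ≤ M := hrle _ (hS (Finset.mem_sdiff.1 h2).1)
    have : H.r u1 = H.r u2 := by omega
    exact hto u1 (hS (Finset.mem_sdiff.1 h1).1) u2 (hS (Finset.mem_sdiff.1 h2).1) this
  have himg : ∑ u ∈ S \ T, 2 ^ (M - H.r u)
      = ∑ i ∈ (S \ T).image (fun u => M - H.r u), 2 ^ i :=
    (Finset.sum_image hinj).symm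
  rw [himg]
  apply sum_two_pow_lt_aux
  intro i hi
  rcases Finset.mem_image.1 hi with ⟨u, hu, rfl⟩
  have h1 : H.r v < H.r u := hstrict u hu
  have h2 : H.r u ≤ M := hrle _ (hS (Finset.mem_sdiff.1 hu).1)
  omega

lemma wlWt_exists (H : HANS E) (hto : TotallyOrdered H) {S T : Finset (Norm E)}
    (hS : S ⊆ H.N) (hT : T ⊆ H.N) (hlt : wlWt H S < wlWt H T) :
    ∃ v ∈ T, v ∉ S ∧ ∀ u ∈ S, u ∉ T → H.r v ≤ H.r u := by
  have hne : ((S \ T) ∪ (T \ S)).Nonempty := by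
    rw [Finset.nonempty_iff_ne_empty]
    intro h
    have h1 : S \ T = ∅ := by
      have := Finset.union_eq_empty.1 h; exact this.1
    have h2 : T \ S = ∅ := by
      have := Finset.union_eq_empty.1 h; exact this.2
    have : S = T :=
      Finset.Subset.antisymm (Finset.sdiff_eq_empty_iff_subset.1 h1)
        (Finset.sdiff_eq_empty_iff_subset.1 h2)
    rw [this] at hlt; exact lt_irrefl _ hlt
  obtain ⟨v, hvD, hvmin⟩ := Finset.exists_min_image _ H.r hne
  rcases Finset.mem_union.1 hvD with hv | hv
  · exfalso
    have := wlWt_lt H hto hT hS (Finset.mem_sdiff.1 hv).1 (Finset.mem_sdiff.1 hv).2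
      (fun u huT huS =>
        hvmin u (Finset.mem_union_right _ (Finset.mem_sdiff.2 ⟨huT, huS⟩)))
    omega
  · exact ⟨v, (Finset.mem_sdiff.1 hv).1, (Finset.mem_sdiff.1 hv).2,
      fun u huS huT =>
        hvmin u (Finset.mem_union_left _ (Finset.mem_sdiff.2 ⟨huS, huT⟩))⟩

lemma ordArg_mem_N {H : HANS E} {l : List (Norm E)} (h : IsOrdArg H l) :
    ∀ v ∈ l, v ∈ H.N := by
  cases l with
  | nil => exact absurd h.1 (by simp [IsPathFrom])
  | cons a t => exact fun v hv => h.1.2.2.1 v hv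

/-- Measure of an argument: binary weight of its set of norms. -/
noncomputable def wlMeas (H : HANS E) : Arg E → ℕ
  | .ord l => wlWt H l.toFinset
  | .ctx _ => 0

lemma toFinset_subset_N {H : HANS E} {l : List (Norm E)} (h : ∀ v ∈ l, v ∈ H.N) :
    l.toFinset ⊆ H.N := fun v hv => h v (List.mem_toFinset.1 hv)

lemma wlPref_iff_weight (H : HANS E) (hto : TotallyOrdered H)
    {l1 l2 : List (Norm E)} (h1 : ∀ v ∈ l1, v ∈ H.N) (h2 : ∀ v ∈ l2, v ∈ H.N) :
    wlPref H.r (.ord l1) (.ord l2) ↔ wlWt H l1.toFinset < wlWt H l2.toFinset := by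
  constructor
  · rintro ⟨v, hv2, hv1, hmin⟩
    exact wlWt_lt H hto (toFinset_subset_N h1) (toFinset_subset_N h2)
      (List.mem_toFinset.2 hv2)
      (fun h => hv1 (List.mem_toFinset.1 h))
      (fun u hu hun => hmin u (List.mem_toFinset.1 hu)
        (fun h => hun (List.mem_toFinset.2 h)))
  · intro h
    obtain ⟨v, hvT, hvS, hmin⟩ :=
      wlWt_exists H hto (toFinset_subset_N h1) (toFinset_subset_N h2) h
    exact ⟨v, List.mem_toFinset.1 hvT, fun h => hvS (List.mem_toFinset.2 h),
      fun u hu hun => hmin u (List.mem_toFinset.2 hu)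
        (fun h => hun (List.mem_toFinset.1 h))⟩

lemma wlMeas_lt_of_defeats (H : HANS E) (hto : TotallyOrdered H) {a b : Arg E}
    (ha : a ∈ ArgSet H) (hb : b ∈ ArgSet H) (hao : a.isOrd) (hbo : b.isOrd)
    (hd : Defeats (wlPref H.r) a b) :
    wlMeas H a < wlMeas H b := by
  obtain ⟨b', hsub, _, hpr⟩ := hd
  cases b with
  | ctx x => exact absurd hbo (by simp [Arg.isOrd])
  | ord lb =>
    cases b' with
    | ctx x => exact absurd hsub (by simp [Arg.Sub])
    | ord lb' =>
      cases a with
      | ctx x => exact absurd hao (by simp [Arg.isOrd])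
      | ord la =>
        rcases hpr with hctx | ⟨_, hpr⟩
        · exact absurd hctx (by simp [Arg.isCtx])
        · have hbN : ∀ v ∈ lb, v ∈ H.N := ordArg_mem_N hb
          have hb'N : ∀ v ∈ lb', v ∈ H.N := fun v hv => hbN v (hsub.2.subset hv)
          have h1 := (wlPref_iff_weight H hto (ordArg_mem_N ha) hb'N).1 hpr
          have h2 : wlWt H lb'.toFinset ≤ wlWt H lb.toFinset := by
            unfold wlWt; exact Finset.sum_le_sum_of_subset (fun x hx =>
              List.mem_toFinset.2 (hsub.2.subset (List.mem_toFinset.1 hx)))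
          simpa [wlMeas] using lt_of_lt_of_le h1 h2

lemma no_cycle_of_measure {α : Type} (A : Set α) (D : α → α → Prop) (m : α → ℕ)
    (h : ∀ x ∈ A, ∀ y ∈ A, D x y → m x < m y) : ¬ HasCycle A D := by
  rintro ⟨a, l, hmem, hchain, hlast⟩
  have key : ∀ (l : List α) (a : α), (∀ x ∈ a :: l, x ∈ A) → List.Chain D a l →
      m a ≤ m ((a :: l).getLast (by simp)) := by
    intro l
    induction l with
    | nil => intro a _ _; simp
    | cons b t ih =>
      intro a hmem hchain
      replace hchain := List.chain_cons.1 hchain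
      have hab : m a < m b :=
        h a (hmem a (by simp)) b (hmem b (by simp)) hchain.1
      have hrest := ih b (fun x hx => hmem x (by simp at hx ⊢; tauto)) hchain.2
      have hgl : ((a :: b :: t).getLast (by simp))
          = ((b :: t).getLast (by simp)) := List.getLast_cons (by simp)
      rw [hgl]
      exact le_trans (le_of_lt hab) hrest
  have h1 := key l a hmem hchain
  have h2 : m ((a :: l).getLast (by simp)) < m a :=
    h _ (hmem _ (List.getLast_mem _)) a (hmem a (by simp)) hlast
  omega

end WLProof

/-- for a totally ordered HANS, the weakest-link defeat relation has no
cycle among ordinary arguments, and strict weakest-link preference is a strict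
partial order (irreflexive and transitive). -/
theorem weakestLink_defeat_acyclic {E : Type} [DecidableEq E] (H : HANS E)
    (hto : TotallyOrdered H) :
    ¬ HasCycle {a : Arg E | a ∈ ArgSet H ∧ a.isOrd} (Defeats (wlPref H.r)) ∧
    (∀ a : Arg E, a ∈ ArgSet H → ¬ sPref (wlPref H.r) a a) ∧
    (∀ a b c : Arg E, a ∈ ArgSet H → b ∈ ArgSet H → c ∈ ArgSet H →
      sPref (wlPref H.r) a b → sPref (wlPref H.r) b c → sPref (wlPref H.r) a c) := by
  refine ⟨?_, ?_, ?_⟩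
  · exact no_cycle_of_measure _ _ (wlMeas H)
      (fun x hx y hy hd => wlMeas_lt_of_defeats H hto hx.1 hy.1 hx.2 hy.2 hd)
  · rintro a _ ⟨h1, h2⟩; exact h2 h1
  · rintro a b c ha hb hc ⟨hab, hnba⟩ ⟨hbc, hncb⟩
    cases a with
    | ctx x => exact absurd hab (by cases b <;> simp [wlPref])
    | ord l1 =>
      cases b with
      | ctx x => exact absurd hab (by simp [wlPref])
      | ord l2 =>
        cases c with
        | ctx x => exact absurd hbc (by simp [wlPref])
        | ord l3 =>
          have h1N : ∀ v ∈ l1, v ∈ H.N := ordArg_mem_N ha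
          have h2N : ∀ v ∈ l2, v ∈ H.N := ordArg_mem_N hb
          have h3N : ∀ v ∈ l3, v ∈ H.N := ordArg_mem_N hc
          have h12 := (wlPref_iff_weight H hto h1N h2N).1 hab
          have h23 := (wlPref_iff_weight H hto h2N h3N).1 hbc
          refine ⟨(wlPref_iff_weight H hto h1N h3N).2 (lt_trans h12 h23), ?_⟩
          intro h
          have h31 := (wlPref_iff_weight H hto h3N h1N).1 h
          omega


end HANSF
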